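/- Fix ε > 0. For each m, let m experts cast independent votes v_1, …, v_m ∈ {0,1}, where expert e votes correctly (equals the ground truth) with probability p_e ≤ 1/2 - ε. Then the probability that a strict majority of the m votes is correct (i.e. that simple majority rule outputs the ground truth) tends to 0 as m → ∞. -/

import Mathlib

open Filter

/-- reverse Condorcet Jury Theorem: If for each `m` the `m`
experts vote independently and each expert's competence is at most `1/2 - ε`
(and above 0), then the probability that a strict majority of the votes is
correct — written as the sum over all majority coalitions `S` of the
probability that exactly the experts in `S` vote correctly — tends to `0` as
`m → ∞`. -/
theorem condorcet_jury_theorem_incompetent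
    (ε : ℝ) (hε : 0 < ε)
    (p : ∀ m : ℕ, Fin m → ℝ)
    (hub : ∀ m (e : Fin m), p m e ≤ 1 / 2 - ε)
    (hlb : ∀ m (e : Fin m), 0 < p m e) :
    Tendsto
      (fun m : ℕ =>
        ∑ S ∈ Finset.univ.powerset.filter (fun S : Finset (Fin m) => m < 2 * S.card),
          (∏ e ∈ S, p m e) * ∏ e ∈ Sᶜ, (1 - p m e))
      atTop (nhds 0) := by
  -- first, ε < 1/2
  have hε2 : ε < 1 / 2 := by
    have h1 := hlb 1 0
    have h2 := hub 1 0
    linarith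
  have h2ε : (0:ℝ) < 1 - 2 * ε := by linarith
  have h2ε' : (0:ℝ) < 1 + 2 * ε := by linarith
  set t : ℝ := Real.sqrt ((1 + 2*ε) / (1 - 2*ε)) with ht_def
  set c : ℝ := Real.sqrt (1 - 4*ε^2) with hc_def
  have htpos : 0 < t := Real.sqrt_pos.2 (div_pos h2ε' h2ε)
  have ht1 : 1 ≤ t := by
    rw [ht_def, Real.le_sqrt zero_le_one (le_of_lt (div_pos h2ε' h2ε))]
    rw [one_pow, le_div_iff₀ h2ε]; linarith
  have htsq : t ^ 2 = (1 + 2*ε) / (1 - 2*ε) :=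
    Real.sq_sqrt (le_of_lt (div_pos h2ε' h2ε))
  have hcnn : 0 ≤ c := Real.sqrt_nonneg _
  have hc1 : c < 1 := by
    rw [hc_def, Real.sqrt_lt' one_pos]; nlinarith
  have htc : t * c = 1 + 2*ε := by
    rw [ht_def, hc_def, ← Real.sqrt_mul (le_of_lt (div_pos h2ε' h2ε))]
    rw [show (1 + 2*ε) / (1 - 2*ε) * (1 - 4*ε^2) = (1 + 2*ε)^2 by
      field_simp; ring]
    exact Real.sqrt_sq (by linarith)
  -- key per-expert bound
  have ht2 : t^2 * (1 - 2*ε) = 1 + 2*ε := by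
    rw [htsq]; field_simp
  have key : ∀ m (e : Fin m), p m e * t^2 + (1 - p m e) ≤ t * c := by
    intro m e
    rw [htc]
    have h1 := hub m e
    have h2 := hlb m e
    nlinarith [mul_le_mul_of_nonneg_left h1 (le_of_lt (mul_pos hε (by linarith : (0:ℝ) < 4)))]
  -- nonneg of terms
  have hterm_nn : ∀ m (S : Finset (Fin m)),
      0 ≤ (∏ e ∈ S, p m e) * ∏ e ∈ Sᶜ, (1 - p m e) := by
    intro m S
    apply mul_nonneg
    · exact Finset.prod_nonneg fun e _ => (hlb m e).le
    · exact Finset.prod_nonneg fun e _ => by have := hub m e; linarith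
  -- main bound
  have hbound : ∀ m : ℕ,
      (∑ S ∈ Finset.univ.powerset.filter (fun S : Finset (Fin m) => m < 2 * S.card),
        (∏ e ∈ S, p m e) * ∏ e ∈ Sᶜ, (1 - p m e)) ≤ c ^ m := by
    intro m
    have step1 : (∑ S ∈ Finset.univ.powerset.filter (fun S : Finset (Fin m) => m < 2 * S.card),
        (∏ e ∈ S, p m e) * ∏ e ∈ Sᶜ, (1 - p m e))
        ≤ ∑ S : Finset (Fin m),
          ((∏ e ∈ S, p m e * t^2) * ∏ e ∈ Sᶜ, (1 - p m e)) / t ^ m := by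
      rw [← Finset.sum_filter_add_sum_filter_not Finset.univ
        (fun S : Finset (Fin m) => m < 2 * S.card)
        (fun S => ((∏ e ∈ S, p m e * t^2) * ∏ e ∈ Sᶜ, (1 - p m e)) / t ^ m)]
      have h1 : (∑ S ∈ Finset.univ.powerset.filter (fun S : Finset (Fin m) => m < 2 * S.card),
          (∏ e ∈ S, p m e) * ∏ e ∈ Sᶜ, (1 - p m e))
          ≤ ∑ S ∈ Finset.univ.filter (fun S : Finset (Fin m) => m < 2 * S.card),
            ((∏ e ∈ S, p m e * t^2) * ∏ e ∈ Sᶜ, (1 - p m e)) / t ^ m := by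
        rw [Finset.powerset_univ]
        apply Finset.sum_le_sum
        intro S hS
        have hScard : m < 2 * S.card := (Finset.mem_filter.1 hS).2
        rw [Finset.prod_mul_distrib, Finset.prod_const]
        have htm : t ^ m ≤ (t^2) ^ S.card := by
          rw [← pow_mul]
          exact pow_le_pow_right₀ ht1 hScard.le
        rw [le_div_iff₀ (pow_pos htpos m)]
        calc (∏ e ∈ S, p m e) * (∏ e ∈ Sᶜ, (1 - p m e)) * t ^ m
            ≤ (∏ e ∈ S, p m e) * (∏ e ∈ Sᶜ, (1 - p m e)) * (t^2)^S.card :=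
              mul_le_mul_of_nonneg_left htm (hterm_nn m S)
          _ = (∏ e ∈ S, p m e) * (t^2)^S.card * ∏ e ∈ Sᶜ, (1 - p m e) := by ring
      have h2 : 0 ≤ ∑ S ∈ Finset.univ.filter (fun S : Finset (Fin m) => ¬ m < 2 * S.card),
          ((∏ e ∈ S, p m e * t^2) * ∏ e ∈ Sᶜ, (1 - p m e)) / t ^ m := by
        apply Finset.sum_nonneg
        intro S _
        apply div_nonneg _ (pow_nonneg htpos.le m)
        apply mul_nonneg
        · exact Finset.prod_nonneg fun e _ => mul_nonneg (hlb m e).le (sq_nonneg t)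
        · exact Finset.prod_nonneg fun e _ => by have := hub m e; linarith
      linarith
    calc _ ≤ ∑ S : Finset (Fin m),
          ((∏ e ∈ S, p m e * t^2) * ∏ e ∈ Sᶜ, (1 - p m e)) / t ^ m := step1
      _ = (∏ e : Fin m, (p m e * t^2 + (1 - p m e))) / t ^ m := by
          rw [Fintype.prod_add, ← Finset.sum_div]
      _ ≤ (t * c) ^ m / t ^ m := by
          gcongr
          calc (∏ e : Fin m, (p m e * t^2 + (1 - p m e)))
              ≤ ∏ _e : Fin m, (t * c) := by
                apply Finset.prod_le_prod
                · intro e _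
                  have h1 := hub m e; have h2 := hlb m e
                  nlinarith [mul_nonneg h2.le (sq_nonneg t)]
                · exact fun e _ => key m e
            _ = (t * c) ^ m := by
                rw [Finset.prod_const, Finset.card_univ, Fintype.card_fin]
      _ = c ^ m := by
          rw [mul_pow, mul_comm, mul_div_assoc, div_self (pow_pos htpos m).ne', mul_one]
  have hnn : ∀ m : ℕ, 0 ≤ (∑ S ∈ Finset.univ.powerset.filter
      (fun S : Finset (Fin m) => m < 2 * S.card),
      (∏ e ∈ S, p m e) * ∏ e ∈ Sᶜ, (1 - p m e)) :=
    fun m => Finset.sum_nonneg fun S _ => hterm_nn m S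
  have hc0 : Tendsto (fun m : ℕ => c ^ m) atTop (nhds 0) :=
    tendsto_pow_atTop_nhds_zero_of_lt_one hcnn hc1
  exact squeeze_zero hnn hbound hc0
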